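/- For every integer k ≥ 1 and every real ξ > 0, one has K^{k}𝟏(ξ) ≤ (C_β/(C_β+C_δ))^{k}. -/

import Mathlib

open MeasureTheory

/-- Birth rate in the allometric setting with `β = α−1`: `b(x) = C_β x^{α−1}` for
`x > x₀` and `0` otherwise. -/
noncomputable def birthRate (x₀ Cβ α : ℝ) (x : ℝ) : ℝ :=
  if x₀ < x then Cβ * x ^ (α - 1) else 0

/-- Death rate `d(x) = C_δ x^{α−1}`. -/
noncomputable def deathRate (Cδ α : ℝ) (x : ℝ) : ℝ := Cδ * x ^ (α - 1)

/-- Net energy gain `g(x) = C_R x^α`. -/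
noncomputable def energyGain (CR α : ℝ) (x : ℝ) : ℝ := CR * x ^ α

/-- The operator `K`:
`K f(ξ) = ∫_ξ^∞ (b(x)/g(x)) exp(−∫_ξ^x (b+d)/g) f(x−x₀) dx`. -/
noncomputable def Kop (x₀ Cβ Cδ CR α : ℝ) (f : ℝ → ℝ) (ξ : ℝ) : ℝ :=
  ∫ x in Set.Ioi ξ,
    birthRate x₀ Cβ α x / energyGain CR α x *
      Real.exp
        (-(∫ τ in ξ..x,
            (birthRate x₀ Cβ α τ + deathRate Cδ α τ) / energyGain CR α τ)) *
      f (x - x₀)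


lemma ratio_eq (C CR α τ : ℝ) (hτ : 0 < τ) (hCR : CR ≠ 0) :
    C * τ ^ (α - 1) / (CR * τ ^ α) = C / CR * τ⁻¹ := by
  rw [Real.rpow_sub hτ, Real.rpow_one]
  have h1 : (τ : ℝ) ^ α ≠ 0 := (Real.rpow_pos_of_pos hτ α).ne'
  field_simp

section Main
variable {α x₀ Cβ Cδ CR : ℝ}

lemma bdiv_nonneg (hx₀ : 0 < x₀) (hCβ : 0 ≤ Cβ) (hCR : 0 < CR) (x : ℝ) :
    0 ≤ birthRate x₀ Cβ α x / energyGain CR α x := by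
  rcases lt_or_ge x₀ x with h | h
  · have hx : 0 ≤ x := (hx₀.trans h).le
    have hg : 0 < energyGain CR α x := mul_pos hCR (Real.rpow_pos_of_pos (hx₀.trans h) α)
    unfold birthRate
    rw [if_pos h]
    exact div_nonneg (mul_nonneg hCβ (Real.rpow_nonneg hx _)) hg.le
  · unfold birthRate
    rw [if_neg (not_lt.mpr h), zero_div]

lemma Kop_nonneg (hx₀ : 0 < x₀) (hCβ : 0 ≤ Cβ) (hCR : 0 < CR) {f : ℝ → ℝ} (hf : ∀ y, 0 ≤ f y) (ξ : ℝ) :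
    0 ≤ Kop x₀ Cβ Cδ CR α f ξ := by
  refine integral_nonneg fun x => ?_
  exact mul_nonneg (mul_nonneg (bdiv_nonneg hx₀ hCβ hCR x) (Real.exp_nonneg _)) (hf _)

lemma Kop_step (hα0 : 0 < α) (hx₀ : 0 < x₀)
    (hCβ : 0 < Cβ) (hCδ : 0 < Cδ) (hCR : 0 < CR)
    {f : ℝ → ℝ} (hf0 : ∀ y, 0 ≤ f y) {c : ℝ} (hc : 0 ≤ c)
    (hfc : ∀ y, 0 < y → f y ≤ c) {ξ : ℝ} (hξ : 0 < ξ) :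
    Kop x₀ Cβ Cδ CR α f ξ ≤ Cβ / (Cβ + Cδ) * c := by
  set h : ℝ → ℝ := fun τ =>
    (birthRate x₀ Cβ α τ + deathRate Cδ α τ) / energyGain CR α τ with hh_def
  set c2 : ℝ := (Cβ + Cδ) / CR with hc2_def
  have hc2 : 0 < c2 := div_pos (by linarith) hCR
  set m : ℝ := max ξ x₀ with hm_def
  have hm : 0 < m := lt_max_of_lt_left hξ
  have hξm : ξ ≤ m := le_max_left _ _
  have hx₀m : x₀ ≤ m := le_max_right _ _
  -- h equals c2/τ beyond x₀
  have hh_eq : ∀ τ : ℝ, x₀ < τ → h τ = c2 * τ⁻¹ := by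
    intro τ hτ
    have hτ0 : 0 < τ := hx₀.trans hτ
    simp only [hh_def, birthRate, deathRate, energyGain, if_pos hτ]
    rw [← add_mul, ratio_eq _ _ _ _ hτ0 hCR.ne']
  have hh_nonneg : ∀ τ : ℝ, 0 < τ → 0 ≤ h τ := by
    intro τ hτ0
    have hnum : 0 ≤ birthRate x₀ Cβ α τ + deathRate Cδ α τ := by
      have h1 : 0 ≤ birthRate x₀ Cβ α τ := by
        unfold birthRate; split
        · exact mul_nonneg hCβ.le (Real.rpow_nonneg hτ0.le _)
        · exact le_refl 0
      have h2 : 0 ≤ deathRate Cδ α τ :=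
        mul_nonneg hCδ.le (Real.rpow_nonneg hτ0.le _)
      linarith
    have hden : 0 < energyGain CR α τ := mul_pos hCR (Real.rpow_pos_of_pos hτ0 α)
    exact div_nonneg hnum hden.le
  have hh_le : ∀ τ : ℝ, 0 < τ → h τ ≤ c2 * τ⁻¹ := by
    intro τ hτ0
    rcases lt_or_ge x₀ τ with hτ | hτ
    · exact (hh_eq τ hτ).le
    · simp only [hh_def, birthRate, deathRate, energyGain, if_neg (not_lt.mpr hτ), zero_add]
      rw [ratio_eq _ _ _ _ hτ0 hCR.ne']
      have hτinv : (0:ℝ) ≤ τ⁻¹ := by positivity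
      have : Cδ / CR ≤ c2 := by
        rw [hc2_def]
        gcongr
        linarith
      exact mul_le_mul_of_nonneg_right this hτinv
  have hbm : Measurable (birthRate x₀ Cβ α) := by
    unfold birthRate
    exact Measurable.ite measurableSet_Ioi (by fun_prop) measurable_const
  have hmeas : Measurable h := by
    apply Measurable.div
    · exact hbm.add (by unfold deathRate; fun_prop)
    · unfold energyGain; fun_prop
  -- interval integrability of h on [a,b] ⊂ (0,∞)
  have hII : ∀ a b : ℝ, 0 < a → a ≤ b → IntervalIntegrable h volume a b := by
    intro a b ha hab
    have hdom : IntervalIntegrable (fun τ => c2 * τ⁻¹) volume a b := by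
      apply ContinuousOn.intervalIntegrable
      apply ContinuousOn.mul continuousOn_const
      apply ContinuousOn.inv₀ continuousOn_id
      intro τ hτ
      rw [Set.uIcc_of_le hab] at hτ
      exact (ha.trans_le hτ.1).ne'
    refine hdom.mono_fun hmeas.aestronglyMeasurable.restrict ?_
    rw [Filter.EventuallyLE, ae_restrict_iff' measurableSet_uIoc]
    refine Filter.Eventually.of_forall fun τ hτ => ?_
    rw [Set.uIoc_of_le hab] at hτ
    have hτ0 : 0 < τ := ha.trans hτ.1
    rw [Real.norm_eq_abs, Real.norm_eq_abs, abs_of_nonneg (hh_nonneg τ hτ0),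
      abs_of_nonneg (by positivity)]
    exact hh_le τ hτ0
  -- lower bound on the inner integral
  have hI_lb : ∀ x : ℝ, m ≤ x → c2 * (Real.log x - Real.log m) ≤ ∫ τ in ξ..x, h τ := by
    intro x hx
    have hx0 : 0 < x := hm.trans_le hx
    rw [← intervalIntegral.integral_add_adjacent_intervals (hII ξ m hξ hξm) (hII m x hm hx)]
    have h1 : 0 ≤ ∫ τ in ξ..m, h τ := by
      apply intervalIntegral.integral_nonneg hξm
      intro u hu
      exact hh_nonneg u (hξ.trans_le hu.1)
    have h2 : (∫ τ in m..x, h τ) = c2 * (Real.log x - Real.log m) := by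
      rw [intervalIntegral.integral_congr_ae (g := fun τ => c2 * τ⁻¹) ?_]
      · rw [intervalIntegral.integral_const_mul]
        have h0 : (0 : ℝ) ∉ Set.uIcc m x := by
          rw [Set.uIcc_of_le hx]
          intro h0
          exact absurd h0.1 (not_le.mpr hm)
        rw [integral_inv h0, Real.log_div hx0.ne' hm.ne']
      · refine Filter.Eventually.of_forall fun τ hτ => ?_
        rw [Set.uIoc_of_le hx] at hτ
        exact hh_eq τ (hx₀m.trans_lt hτ.1)
    linarith
  -- dominating function
  set p : ℝ := -(1 + c2) with hp_def
  have hp : p < -1 := by rw [hp_def]; linarith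
  set C : ℝ := Cβ / CR * m ^ c2 * c with hC_def
  have hC0 : 0 ≤ C := by positivity
  set F : ℝ → ℝ := Set.indicator (Set.Ioi m) (fun x => C * x ^ p) with hF_def
  have hFint : IntegrableOn F (Set.Ioi ξ) := by
    have base : IntegrableOn (fun x : ℝ => C * x ^ p) (Set.Ioi m) :=
      (integrableOn_Ioi_rpow_of_lt hp hm).const_mul C
    exact ((integrable_indicator_iff measurableSet_Ioi).mpr base).integrableOn
  -- pointwise bound
  have hFle : ∀ x ∈ Set.Ioi ξ, birthRate x₀ Cβ α x / energyGain CR α x *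
      Real.exp (-(∫ τ in ξ..x, h τ)) * f (x - x₀) ≤ F x := by
    intro x hx
    rcases le_or_gt x m with hxm | hxm
    · have hxx₀ : x ≤ x₀ := by
        rcases max_cases ξ x₀ with ⟨he, _⟩ | ⟨he, _⟩
        · exact absurd (hxm.trans_eq he) (not_le.mpr hx)
        · exact hxm.trans_eq he
      have hb : birthRate x₀ Cβ α x = 0 := if_neg (not_lt.mpr hxx₀)
      have hF : F x = 0 := Set.indicator_of_notMem (by simpa using hxm) _
      rw [hb, hF, zero_div, zero_mul, zero_mul]
    · have hx0 : 0 < x := hm.trans hxm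
      have hxx₀ : x₀ < x := hx₀m.trans_lt hxm
      have hF : F x = C * x ^ p := Set.indicator_of_mem hxm _
      have hb : birthRate x₀ Cβ α x / energyGain CR α x = Cβ / CR * x⁻¹ := by
        unfold birthRate energyGain
        rw [if_pos hxx₀, ratio_eq _ _ _ _ hx0 hCR.ne']
      have hexp : Real.exp (-(∫ τ in ξ..x, h τ)) ≤ m ^ c2 * x ^ (-c2) := by
        have h1 : Real.exp (-(∫ τ in ξ..x, h τ)) ≤
            Real.exp (-(c2 * (Real.log x - Real.log m))) :=
          Real.exp_le_exp.mpr (neg_le_neg (hI_lb x hxm.le))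
        refine h1.trans_eq ?_
        rw [Real.rpow_def_of_pos hm, Real.rpow_def_of_pos hx0, ← Real.exp_add]
        ring_nf
      have hxp : x ^ p = x⁻¹ * x ^ (-c2) := by
        rw [hp_def, show -(1 + c2) = -1 + -c2 by ring, Real.rpow_add hx0,
          Real.rpow_neg_one]
      rw [hF, hb, hxp, hC_def]
      have hfx : f (x - x₀) ≤ c := hfc _ (by linarith)
      calc Cβ / CR * x⁻¹ * Real.exp (-(∫ τ in ξ..x, h τ)) * f (x - x₀)
          ≤ Cβ / CR * x⁻¹ * (m ^ c2 * x ^ (-c2)) * c := by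
            apply mul_le_mul (mul_le_mul_of_nonneg_left hexp (by positivity)) hfx
              (hf0 _) (by positivity)
        _ = Cβ / CR * m ^ c2 * c * (x⁻¹ * x ^ (-c2)) := by ring
  -- value of ∫ F
  have hFval : (∫ x in Set.Ioi ξ, F x) = Cβ / (Cβ + Cδ) * c := by
    rw [hF_def, setIntegral_indicator measurableSet_Ioi]
    have hs : Set.Ioi ξ ∩ Set.Ioi m = Set.Ioi m := by
      rw [Set.Ioi_inter_Ioi, max_eq_right hξm]
    rw [hs, MeasureTheory.integral_const_mul, integral_Ioi_rpow_of_lt hp hm]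
    have hpe : p + 1 = -c2 := by rw [hp_def]; ring
    rw [hpe, Real.rpow_neg hm.le, neg_div_neg_eq, hC_def]
    have hM : (0 : ℝ) < m ^ c2 := Real.rpow_pos_of_pos hm c2
    have key : ∀ M : ℝ, 0 < M →
        Cβ / CR * M * c * (M⁻¹ / c2) = Cβ / (Cβ + Cδ) * c := by
      intro M hMpos
      have h1 : M ≠ 0 := hMpos.ne'
      have h2 : CR ≠ 0 := hCR.ne'
      have h3 : Cβ + Cδ ≠ 0 := by positivity
      rw [hc2_def]
      field_simp
    exact key _ hM
  -- conclude
  unfold Kop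
  rw [← hFval]
  apply integral_mono_of_nonneg
  · exact Filter.Eventually.of_forall fun x =>
      mul_nonneg (mul_nonneg (bdiv_nonneg hx₀ hCβ.le hCR x) (Real.exp_nonneg _)) (hf0 _)
  · exact hFint
  · exact (ae_restrict_iff' measurableSet_Ioi).mpr (Filter.Eventually.of_forall hFle)

end Main

/-- Lemma 6.18, first part: for every `k ≥ 1` and every `ξ > 0`,
`K^k 𝟏(ξ) ≤ (C_β/(C_β+C_δ))^k`. -/
theorem stmt12 (α x₀ Cβ Cδ CR : ℝ)
    (hα0 : 0 < α) (hα1 : α ≤ 1) (hx₀ : 0 < x₀)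
    (hCβ : 0 < Cβ) (hCδ : 0 < Cδ) (hCR : 0 < CR) :
    ∀ k : ℕ, 1 ≤ k → ∀ ξ : ℝ, 0 < ξ →
      (Kop x₀ Cβ Cδ CR α)^[k] (fun _ => 1) ξ ≤ (Cβ / (Cβ + Cδ)) ^ k := by
  have hr0 : 0 ≤ Cβ / (Cβ + Cδ) := by positivity
  have key : ∀ k : ℕ, (∀ y : ℝ, 0 ≤ (Kop x₀ Cβ Cδ CR α)^[k] (fun _ => 1) y) ∧
      (∀ y : ℝ, 0 < y →
        (Kop x₀ Cβ Cδ CR α)^[k] (fun _ => 1) y ≤ (Cβ / (Cβ + Cδ)) ^ k) := by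
    intro k
    induction k with
    | zero => exact ⟨fun y => by simp, fun y _ => by simp⟩
    | succ n ih =>
      constructor
      · intro y
        rw [Function.iterate_succ_apply']
        exact Kop_nonneg hx₀ hCβ.le hCR ih.1 y
      · intro y hy
        rw [Function.iterate_succ_apply', pow_succ, mul_comm]
        exact Kop_step hα0 hx₀ hCβ hCδ hCR ih.1 (by positivity) ih.2 hy
  intro k _ ξ hξ
  exact (key k).2 ξ hξ
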